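/- Let k ≥ 1 and l ≥ 1 be integers. In ℝ³ with the standard inner product, let 𝒞 be the set of all linear combinations with nonnegative real coefficients of the four vectors (1,0,0), (1,k,0), (1,l,1), (1,0,1). Then the dual cone {y ∈ ℝ³ : ⟨y, x⟩ ≥ 0 for all x ∈ 𝒞} equals the set of all linear combinations with nonnegative real coefficients of the four vectors u = (1,0,−1), v = (0,0,1), w = (0,1,0), z = (k,−1,l−k). -/
import Mathlib


/-- The dual of the cone `𝒞 ⊂ ℝ³` generated by `(1,0,0), (1,k,0), (1,l,1), (1,0,1)`
is the cone generated by `u = (1,0,−1)`, `v = (0,0,1)`, `w = (0,1,0)`,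
`z = (k,−1,l−k)`. -/
theorem stmt3 (k l : ℕ) (hk : 1 ≤ k) (hl : 1 ≤ l) :
    {y : ℝ × ℝ × ℝ |
        ∀ x ∈ {x : ℝ × ℝ × ℝ | ∃ a b c d : ℝ, 0 ≤ a ∧ 0 ≤ b ∧ 0 ≤ c ∧ 0 ≤ d ∧
            x = a • ((1 : ℝ), (0 : ℝ), (0 : ℝ)) + b • ((1 : ℝ), (k : ℝ), (0 : ℝ)) +
              c • ((1 : ℝ), (l : ℝ), (1 : ℝ)) + d • ((1 : ℝ), (0 : ℝ), (1 : ℝ))},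
          0 ≤ y.1 * x.1 + y.2.1 * x.2.1 + y.2.2 * x.2.2} =
      {y : ℝ × ℝ × ℝ | ∃ a b c d : ℝ, 0 ≤ a ∧ 0 ≤ b ∧ 0 ≤ c ∧ 0 ≤ d ∧
          y = a • ((1 : ℝ), (0 : ℝ), (-1 : ℝ)) + b • ((0 : ℝ), (0 : ℝ), (1 : ℝ)) +
            c • ((0 : ℝ), (1 : ℝ), (0 : ℝ)) + d • ((k : ℝ), (-1 : ℝ), (l : ℝ) - (k : ℝ))} := by
  have hk' : (1 : ℝ) ≤ (k : ℝ) := by exact_mod_cast hk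
  have hl' : (1 : ℝ) ≤ (l : ℝ) := by exact_mod_cast hl
  have hk0 : (0 : ℝ) ≤ (k : ℝ) := by linarith
  have hl0 : (0 : ℝ) ≤ (l : ℝ) := by linarith
  ext ⟨p, q, r⟩
  simp only [Set.mem_setOf_eq, Prod.mk.injEq, Prod.smul_mk, smul_eq_mul, Prod.mk_add_mk]
  constructor
  · intro h
    have h1 := h (1, 0, 0) ⟨1, 0, 0, 0, by norm_num, by norm_num, by norm_num, by norm_num,
      by norm_num⟩
    have h2 := h (1, k, 0) ⟨0, 1, 0, 0, by norm_num, by norm_num, by norm_num, by norm_num,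
      by norm_num⟩
    have h3 := h (1, l, 1) ⟨0, 0, 1, 0, by norm_num, by norm_num, by norm_num, by norm_num,
      by norm_num⟩
    have h4 := h (1, 0, 1) ⟨0, 0, 0, 1, by norm_num, by norm_num, by norm_num, by norm_num,
      by norm_num⟩
    simp only [mul_one, mul_zero, add_zero, zero_add] at h1 h2 h3 h4
    rcases le_or_gt 0 q with hq | hq
    · exact ⟨p, p + r, q, 0, h1, by linarith, hq, le_refl 0, by constructor <;> [ring; constructor <;> ring]⟩
    · refine ⟨p + k * q, p + l * q + r, 0, -q, by linarith, by linarith, le_refl 0, by linarith,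
        ?_⟩
      refine ⟨by ring, by ring, by ring⟩
  · rintro ⟨a, b, c, d, ha, hb, hc, hd, hp, hq, hr⟩ ⟨x1, x2, x3⟩
      ⟨a', b', c', d', ha', hb', hc', hd', hx⟩
    subst hp hq hr
    simp only [Prod.smul_mk, smul_eq_mul, Prod.mk_add_mk, Prod.mk.injEq] at hx
    obtain ⟨h1, h2, h3⟩ := hx
    subst h1 h2 h3
    have e1 := mul_nonneg ha ha'
    have e2 := mul_nonneg ha hb'
    have e3 := mul_nonneg hb hc'
    have e4 := mul_nonneg hb hd'
    have e5 := mul_nonneg (mul_nonneg hc hb') hk0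
    have e6 := mul_nonneg (mul_nonneg hc hc') hl0
    have e7 := mul_nonneg (mul_nonneg hd ha') hk0
    have e8 := mul_nonneg (mul_nonneg hd hd') hl0
    dsimp only
    nlinarith [e1, e2, e3, e4, e5, e6, e7, e8]
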